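/- arXiv:1307.0481 — 4 statements merged into one kernel-verified Lean document; each statement's English description precedes it below -/
import Mathlib

section
/- Fix an index α ∈ {1,…,g} and characteristics p, q ∈ ℂ^g with θ[p,q](0) ≠ 0. Then the map w ↦ θ̃[p,q'], where q' is q with its α-th entry replaced by w, is complex differentiable at w = q_α, and its derivative equals θ̃[p,q] · ( −πi·p_α + (∂θ[p,q]/∂z_α)(0) / θ[p,q](0) ). (This is the second variational formula of the paper's Lemma on derivatives of the modified theta constant: ∂/∂q_α log θ̃[p,q](0) = −πi p_α + ∮_{a_α} w, where the a-period of w = Σ_β ∂_β log θ[p,q](0) u_β equals ∂_α log θ[p,q](0).) -/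
/-- The genus `g` theta function with characteristics `p, q ∈ ℂ^g`:
`θ[p,q](z) = Σ_{m ∈ ℤ^g} exp(πi⟨Ω(m+p), m+p⟩ + 2πi⟨m+p, z+q⟩)`,
where `⟨u,v⟩ = Σ_j u_j v_j`. -/
noncomputable def ThetaG (g : ℕ) (Ω : Matrix (Fin g) (Fin g) ℂ)
    (p q z : Fin g → ℂ) : ℂ :=
  ∑' m : Fin g → ℤ,
    Complex.exp ((Real.pi : ℂ) * Complex.I *
        (∑ i, (∑ j, Ω i j * ((m j : ℂ) + p j)) * ((m i : ℂ) + p i)) +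
      2 * (Real.pi : ℂ) * Complex.I * (∑ j, ((m j : ℂ) + p j) * (z j + q j)))

/-- The modified theta constant `θ̃[p,q] = exp(−πi⟨p,q⟩)·θ[p,q](0)`. -/
noncomputable def ThetaTildeG (g : ℕ) (Ω : Matrix (Fin g) (Fin g) ℂ)
    (p q : Fin g → ℂ) : ℂ :=
  Complex.exp (-(Real.pi : ℂ) * Complex.I * (∑ j, p j * q j)) * ThetaG g Ω p q 0


open Finset

lemma aux_exp_int_summable : Summable fun n : ℤ => Real.exp (-|(n : ℝ)|) := by
  apply Summable.of_nat_of_neg <;> simpa using Real.summable_exp_neg_nat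

lemma aux_summable_prod (h : ℤ → ℝ) (h0 : ∀ n, 0 ≤ h n) (hs : Summable h) :
    ∀ d : ℕ, Summable (fun m : Fin d → ℤ => ∏ i, h (m i)) := by
  intro d
  induction d with
  | zero =>
      have : Finite (Fin 0 → ℤ) := by infer_instance
      exact Summable.of_finite
  | succ d ih =>
      have key := hs.mul_of_nonneg ih (fun n => h0 n)
        (fun m => Finset.prod_nonneg fun i _ => h0 _)
      rw [← (Fin.consEquiv (fun _ : Fin (d+1) => ℤ)).summable_iff]
      have heq : ((fun m : Fin (d+1) → ℤ => ∏ i, h (m i)) ∘ (Fin.consEquiv fun _ => ℤ)) =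
          fun x : ℤ × (Fin d → ℤ) => h x.1 * ∏ i, h (x.2 i) := by
        funext x
        simp [Fin.consEquiv, Fin.prod_univ_succ]
      rw [heq]
      exact key

lemma aux_quad (a b : ℝ) (ha : 0 < a) : ∃ K : ℝ, ∀ x : ℝ, b * |x| - a * x ^ 2 ≤ K - |x| := by
  refine ⟨(b+1)^2/(4*a), fun x => ?_⟩
  have h4a : (0:ℝ) < 4*a := by linarith
  have hmain : b*|x| - a*x^2 + |x| ≤ (b+1)^2/(4*a) := by
    rw [le_div_iff₀ h4a, ← sq_abs x]
    nlinarith [sq_nonneg (2*a*|x| - (b+1))]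
  linarith

lemma aux_coercive {g : ℕ} (hg : 1 ≤ g) (Y : Matrix (Fin g) (Fin g) ℝ) (hY : Y.PosDef) :
    ∃ lam : ℝ, 0 < lam ∧ ∀ n : Fin g → ℝ, lam * ∑ i, n i ^ 2 ≤ ∑ i, (∑ j, Y i j * n j) * n i := by
  classical
  set f : EuclideanSpace ℝ (Fin g) → ℝ := fun x => ∑ i, (∑ j, Y i j * x j) * x i with hf
  have hcont : Continuous f := by
    simp only [hf]; fun_prop
  have hscale : ∀ (c : ℝ) (x : EuclideanSpace ℝ (Fin g)), f (c • x) = c^2 * f x := by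
    intro c x
    simp only [hf]
    rw [Finset.mul_sum]
    refine Finset.sum_congr rfl fun i _ => ?_
    have h1 : ∀ j, (c • x) j = c * x j := fun j => rfl
    simp_rw [h1]
    rw [show (∑ j, Y i j * (c * x j)) = c * ∑ j, Y i j * x j by
      rw [Finset.mul_sum]; exact Finset.sum_congr rfl fun j _ => by ring]
    ring
  have hposf : ∀ x : EuclideanSpace ℝ (Fin g), x ≠ 0 → 0 < f x := by
    intro x hx
    have h2 := hY.dotProduct_mulVec_pos (x := WithLp.ofLp x) (by simpa using hx)
    simpa [hf, dotProduct, Matrix.mulVec, mul_comm, Finset.mul_sum] using h2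
  obtain ⟨z, hzmem, hzmin⟩ := (isCompact_sphere (0 : EuclideanSpace ℝ (Fin g)) 1).exists_isMinOn
    ⟨EuclideanSpace.single (⟨0, hg⟩ : Fin g) (1:ℝ), by
      simp [mem_sphere_zero_iff_norm, EuclideanSpace.norm_single]⟩
    hcont.continuousOn
  rw [mem_sphere_zero_iff_norm] at hzmem
  have hzne : z ≠ 0 := by
    intro h; rw [h, norm_zero] at hzmem; exact one_ne_zero hzmem.symm
  refine ⟨f z, hposf z hzne, ?_⟩
  intro n
  by_cases hn : n = 0
  · rw [hn]; simp [hf]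
  · set x : EuclideanSpace ℝ (Fin g) := WithLp.toLp 2 n with hx
    have hxne : x ≠ 0 := by simpa [hx] using hn
    have hxnorm : (0:ℝ) < ‖x‖ := norm_pos_iff.mpr hxne
    have hx1 : ‖(‖x‖⁻¹ : ℝ) • x‖ = 1 := by
      rw [norm_smul, Real.norm_eq_abs, abs_of_nonneg (inv_nonneg.mpr (norm_nonneg x)),
        inv_mul_cancel₀ (ne_of_gt hxnorm)]
    have hmin := hzmin (mem_sphere_zero_iff_norm.mpr hx1)
    simp only [Set.mem_setOf_eq] at hmin
    rw [hscale] at hmin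
    have hnorm2 : ‖x‖^2 = ∑ i, n i ^ 2 := by
      rw [EuclideanSpace.norm_eq, Real.sq_sqrt (Finset.sum_nonneg fun i _ => sq_nonneg _)]
      exact Finset.sum_congr rfl fun i _ => by rw [Real.norm_eq_abs, sq_abs]
    have hkey : f z * ‖x‖^2 ≤ f x := by
      have h3 := mul_le_mul_of_nonneg_right hmin (sq_nonneg ‖x‖)
      calc f z * ‖x‖^2 ≤ (‖x‖⁻¹)^2 * f x * ‖x‖^2 := h3
        _ = f x := by field_simp
    calc f z * ∑ i, n i^2 = f z * ‖x‖^2 := by rw [hnorm2]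
      _ ≤ f x := hkey
      _ = ∑ i, (∑ j, Y i j * n j) * n i := rfl

open Finset in
/-- the `z`-independent part of the exponent in the theta series -/
noncomputable def thetaB (g : ℕ) (Ω : Matrix (Fin g) (Fin g) ℂ) (p q : Fin g → ℂ)
    (m : Fin g → ℤ) : ℂ :=
  (Real.pi : ℂ) * Complex.I *
      (∑ i, (∑ j, Ω i j * ((m j : ℂ) + p j)) * ((m i : ℂ) + p i)) +
    2 * (Real.pi : ℂ) * Complex.I * (∑ j, ((m j : ℂ) + p j) * q j)

/-- the coefficient of `t` in the exponent -/
noncomputable def thetaC (g : ℕ) (p : Fin g → ℂ) (α : Fin g) (m : Fin g → ℤ) : ℂ :=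
  2 * (Real.pi : ℂ) * Complex.I * ((m α : ℂ) + p α)

/-- the summable majorant -/
noncomputable def thetaU (g : ℕ) (Ω : Matrix (Fin g) (Fin g) ℂ) (p q : Fin g → ℂ)
    (α : Fin g) (m : Fin g → ℤ) : ℝ :=
  norm (thetaC g p α m) *
    Real.exp ((thetaB g Ω p q m).re + norm (thetaC g p α m))

open Finset in
lemma aux_summable_master (g : ℕ) (a b A : ℝ) (ha : 0 < a) (hA : 0 ≤ A) :
    Summable (fun m : Fin g → ℤ =>
      A * (1 + ∑ i, |(m i : ℝ)|) *
        Real.exp (-a * (∑ i, (m i : ℝ)^2) + b * (1 + ∑ i, |(m i : ℝ)|))) := by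
  obtain ⟨K, hK⟩ := aux_quad a (b+1) ha
  set h : ℤ → ℝ := fun n => Real.exp K * Real.exp (-|(n : ℝ)|) with hh
  have hsum : Summable (fun m : Fin g → ℤ => (A * Real.exp b) * ∏ i, h (m i)) :=
    (aux_summable_prod h (fun n => by positivity) (aux_exp_int_summable.mul_left _) g).mul_left _
  refine Summable.of_nonneg_of_le (fun m => ?_) (fun m => ?_) hsum
  · have : (0:ℝ) ≤ ∑ i, |(m i : ℝ)| := Finset.sum_nonneg fun i _ => abs_nonneg _
    positivity
  · set N := ∑ i, |(m i : ℝ)| with hN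
    have hN0 : (0:ℝ) ≤ N := Finset.sum_nonneg fun i _ => abs_nonneg _
    calc A * (1 + N) * Real.exp (-a * (∑ i, (m i : ℝ)^2) + b * (1 + N))
        = (A * Real.exp b) * ((1 + N) * Real.exp (-a * (∑ i, (m i : ℝ)^2) + b * N)) := by
          rw [show -a * (∑ i, (m i : ℝ)^2) + b * (1 + N)
            = b + (-a * (∑ i, (m i : ℝ)^2) + b * N) by ring, Real.exp_add]
          ring
      _ ≤ (A * Real.exp b) * (Real.exp N * Real.exp (-a * (∑ i, (m i : ℝ)^2) + b * N)) := by
          have h1 : (1:ℝ) + N ≤ Real.exp N := by linarith [Real.add_one_le_exp N]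
          have h2 : (0:ℝ) ≤ A * Real.exp b := by positivity
          exact mul_le_mul_of_nonneg_left
            (mul_le_mul_of_nonneg_right h1 (Real.exp_pos _).le) h2
      _ = (A * Real.exp b) * Real.exp (-a * (∑ i, (m i : ℝ)^2) + (b+1) * N) := by
          rw [← Real.exp_add]
          ring_nf
      _ = (A * Real.exp b) * ∏ i, Real.exp (-a * (m i : ℝ)^2 + (b+1) * |(m i : ℝ)|) := by
          rw [← Real.exp_sum]
          congr 2
          rw [Finset.sum_add_distrib, ← Finset.mul_sum, ← Finset.mul_sum, ← hN]
      _ ≤ (A * Real.exp b) * ∏ i, h (m i) := by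
          refine mul_le_mul_of_nonneg_left ?_ (by positivity)
          refine Finset.prod_le_prod (fun i _ => (Real.exp_pos _).le) (fun i _ => ?_)
          simp only [hh]
          rw [← Real.exp_add]
          apply Real.exp_le_exp.mpr
          have := hK (m i : ℝ)
          linarith

open Finset in
lemma summable_thetaU (g : ℕ) (Ω : Matrix (Fin g) (Fin g) ℂ) (p q : Fin g → ℂ) (α : Fin g)
    (hg : 1 ≤ g) (hpos : (Ω.map Complex.im).PosDef) :
    Summable (thetaU g Ω p q α) := by
  classical
  have hπ := Real.pi_pos
  obtain ⟨lam, hlam, hco⟩ := aux_coercive hg (Ω.map Complex.im) hpos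
  set P := ∑ j, norm (p j) with hP
  set Qc := ∑ j, norm (q j) with hQc
  set CW := ∑ i, ∑ j, norm (Ω i j) with hCW
  have hP0 : 0 ≤ P := Finset.sum_nonneg fun j _ => norm_nonneg _
  have hQc0 : 0 ≤ Qc := Finset.sum_nonneg fun j _ => norm_nonneg _
  have hCW0 : 0 ≤ CW := Finset.sum_nonneg fun i _ => Finset.sum_nonneg fun j _ => norm_nonneg _
  have hN0 : ∀ m : Fin g → ℤ, (0:ℝ) ≤ ∑ i, |(m i : ℝ)| :=
    fun m => Finset.sum_nonneg fun i _ => abs_nonneg _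
  have hNle : ∀ (m : Fin g → ℤ) (i : Fin g), |(m i : ℝ)| ≤ ∑ i, |(m i : ℝ)| :=
    fun m i => Finset.single_le_sum (f := fun i => |(m i : ℝ)|) (fun j _ => abs_nonneg _)
      (Finset.mem_univ i)
  have hPle : ∀ j, norm (p j) ≤ P :=
    fun j => Finset.single_le_sum (fun j _ => norm_nonneg _) (Finset.mem_univ j)
  have hQle : ∀ j, norm (q j) ≤ Qc :=
    fun j => Finset.single_le_sum (fun j _ => norm_nonneg _) (Finset.mem_univ j)
  -- bound for the coefficient
  have hcB : ∀ m : Fin g → ℤ, norm (thetaC g p α m)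
      ≤ (2*Real.pi*(1+P)) * (1 + ∑ i, |(m i : ℝ)|) := by
    intro m
    have h1 : norm (thetaC g p α m) = 2*Real.pi * norm ((m α : ℂ) + p α) := by
      simp only [thetaC, norm_mul, Complex.norm_two, Complex.norm_I, Complex.norm_real, Real.norm_eq_abs,
        abs_of_pos hπ, mul_one]
    have h2 : norm ((m α : ℂ) + p α) ≤ |(m α : ℝ)| + norm (p α) := by
      refine le_trans (norm_add_le _ _) ?_
      have h3 : norm ((m α : ℂ)) = |(m α : ℝ)| := by
        rw [show ((m α : ℂ)) = (((m α : ℝ)) : ℂ) by push_cast; ring, Complex.norm_real, Real.norm_eq_abs]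
      rw [h3]
    have h4 : norm ((m α : ℂ) + p α) ≤ (1+P) * (1 + ∑ i, |(m i : ℝ)|) := by
      nlinarith [hNle m α, hPle α, hN0 m, hP0, abs_nonneg ((m α : ℝ)),
        norm_nonneg (p α), h2, mul_nonneg hP0 (hN0 m)]
    rw [h1]
    linarith [mul_le_mul_of_nonneg_left h4 hπ.le]
  -- imaginary part of the pure quadratic term
  have hQ0im : ∀ m : Fin g → ℤ,
      (∑ i, ∑ j, Ω i j * ((m j : ℝ) : ℂ) * ((m i : ℝ) : ℂ)).im
        = ∑ i, ∑ j, (Ω i j).im * (m j : ℝ) * (m i : ℝ) := by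
    intro m
    rw [Complex.im_sum]
    refine Finset.sum_congr rfl fun i _ => ?_
    rw [Complex.im_sum]
    refine Finset.sum_congr rfl fun j _ => ?_
    have h4 : Ω i j * ((m j : ℝ) : ℂ) * ((m i : ℝ) : ℂ)
        = Ω i j * ((((m j : ℝ)) * ((m i : ℝ)) : ℝ) : ℂ) := by push_cast; ring
    rw [h4, Complex.mul_im, Complex.ofReal_re, Complex.ofReal_im]
    ring
  have hIm_coer : ∀ m : Fin g → ℤ, lam * ∑ i, (m i : ℝ)^2
      ≤ (∑ i, ∑ j, Ω i j * ((m j : ℝ) : ℂ) * ((m i : ℝ) : ℂ)).im := by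
    intro m
    rw [hQ0im]
    refine le_trans (hco fun i => (m i : ℝ)) (le_of_eq ?_)
    refine Finset.sum_congr rfl fun i _ => ?_
    rw [Finset.sum_mul]
    refine Finset.sum_congr rfl fun j _ => ?_
    rw [Matrix.map_apply]
    try ring
  -- bound for the difference between the full quadratic and the pure quadratic
  have hQdiff : ∀ m : Fin g → ℤ,
      norm ((∑ i, (∑ j, Ω i j * ((m j : ℂ) + p j)) * ((m i : ℂ) + p i))
        - ∑ i, ∑ j, Ω i j * ((m j : ℝ) : ℂ) * ((m i : ℝ) : ℂ))
      ≤ CW * ((2*P + P^2) * (1 + ∑ i, |(m i : ℝ)|)) := by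
    intro m
    have h1 : (∑ i, (∑ j, Ω i j * ((m j : ℂ) + p j)) * ((m i : ℂ) + p i))
        - ∑ i, ∑ j, Ω i j * ((m j : ℝ) : ℂ) * ((m i : ℝ) : ℂ)
        = ∑ i, ∑ j, Ω i j * (((m j : ℝ) : ℂ) * p i + p j * ((m i : ℝ) : ℂ) + p j * p i) := by
      rw [← Finset.sum_sub_distrib]
      refine Finset.sum_congr rfl fun i _ => ?_
      rw [Finset.sum_mul, ← Finset.sum_sub_distrib]
      refine Finset.sum_congr rfl fun j _ => ?_
      push_cast
      ring
    rw [h1]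
    refine le_trans (norm_sum_le _ _) ?_
    refine le_trans (Finset.sum_le_sum fun i _ => norm_sum_le _ _) ?_
    have hterm : ∀ i j, norm (Ω i j *
          (((m j : ℝ) : ℂ) * p i + p j * ((m i : ℝ) : ℂ) + p j * p i))
        ≤ norm (Ω i j) * ((2*P + P^2) * (1 + ∑ i, |(m i : ℝ)|)) := by
      intro i j
      rw [norm_mul]
      refine mul_le_mul_of_nonneg_left ?_ (norm_nonneg _)
      refine le_trans (norm_add_le _ _) ?_
      have h3 := norm_add_le (((m j : ℝ) : ℂ) * p i) (p j * ((m i : ℝ) : ℂ))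
      have ha : norm (((m j : ℝ) : ℂ) * p i) = |(m j : ℝ)| * norm (p i) := by
        rw [norm_mul, Complex.norm_real, Real.norm_eq_abs]
      have hb : norm (p j * ((m i : ℝ) : ℂ)) = norm (p j) * |(m i : ℝ)| := by
        rw [norm_mul, Complex.norm_real, Real.norm_eq_abs]
      have hc' : norm (p j * p i) = norm (p j) * norm (p i) :=
        norm_mul _ _
      nlinarith [hNle m i, hNle m j, hPle i, hPle j, hN0 m, hP0,
        abs_nonneg ((m i : ℝ)), abs_nonneg ((m j : ℝ)),
        norm_nonneg (p i), norm_nonneg (p j),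
        mul_le_mul (hNle m j) (hPle i) (norm_nonneg (p i)) (hN0 m),
        mul_le_mul (hPle j) (hNle m i) (abs_nonneg ((m i : ℝ))) hP0,
        mul_le_mul (hPle j) (hPle i) (norm_nonneg (p i)) hP0,
        mul_nonneg (mul_nonneg hP0 hP0) (hN0 m), mul_nonneg hP0 (hN0 m)]
    refine le_trans (Finset.sum_le_sum fun i _ => Finset.sum_le_sum fun j _ => hterm i j) ?_
    simp_rw [← Finset.sum_mul]
    rw [hCW]
  -- bound for the linear term
  have hLbound : ∀ m : Fin g → ℤ, norm (∑ j, ((m j : ℂ) + p j) * q j)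
      ≤ (Qc + P*Qc) * (1 + ∑ i, |(m i : ℝ)|) := by
    intro m
    refine le_trans (norm_sum_le _ _) ?_
    have hterm : ∀ j, norm (((m j : ℂ) + p j) * q j)
        ≤ (|(m j : ℝ)| + norm (p j)) * norm (q j) := by
      intro j
      rw [norm_mul]
      refine mul_le_mul_of_nonneg_right ?_ (norm_nonneg _)
      refine le_trans (norm_add_le _ _) ?_
      rw [show ((m j : ℂ)) = (((m j : ℝ)) : ℂ) by push_cast; ring, Complex.norm_real, Real.norm_eq_abs]
    refine le_trans (Finset.sum_le_sum fun j _ => hterm j) ?_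
    have h5 : ∑ j, (|(m j : ℝ)| + norm (p j)) * norm (q j)
        ≤ ∑ j, ((∑ i, |(m i : ℝ)|) + P) * norm (q j) :=
      Finset.sum_le_sum fun j _ => mul_le_mul_of_nonneg_right
        (by linarith [hNle m j, hPle j]) (norm_nonneg _)
    refine le_trans h5 ?_
    rw [← Finset.mul_sum, ← hQc]
    nlinarith [hN0 m, hP0, hQc0, mul_nonneg hP0 hQc0, mul_nonneg (mul_nonneg hP0 hQc0) (hN0 m)]
  -- real part bound for thetaB
  have hReB : ∀ m : Fin g → ℤ, (thetaB g Ω p q m).re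
      ≤ -(Real.pi*lam) * (∑ i, (m i : ℝ)^2)
        + (Real.pi * (CW * ((2*P + P^2) * (1 + ∑ i, |(m i : ℝ)|)))
          + 2*Real.pi * ((Qc + P*Qc) * (1 + ∑ i, |(m i : ℝ)|))) := by
    intro m
    have hsplit : thetaB g Ω p q m
        = (Real.pi : ℂ) * Complex.I * (∑ i, ∑ j, Ω i j * ((m j : ℝ) : ℂ) * ((m i : ℝ) : ℂ))
          + ((Real.pi : ℂ) * Complex.I *
              ((∑ i, (∑ j, Ω i j * ((m j : ℂ) + p j)) * ((m i : ℂ) + p i))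
                - ∑ i, ∑ j, Ω i j * ((m j : ℝ) : ℂ) * ((m i : ℝ) : ℂ))
            + 2 * (Real.pi : ℂ) * Complex.I * (∑ j, ((m j : ℂ) + p j) * q j)) := by
      simp only [thetaB]
      ring
    rw [hsplit, Complex.add_re]
    have h2 : ((Real.pi : ℂ) * Complex.I *
        (∑ i, ∑ j, Ω i j * ((m j : ℝ) : ℂ) * ((m i : ℝ) : ℂ))).re
        = -(Real.pi * (∑ i, ∑ j, Ω i j * ((m j : ℝ) : ℂ) * ((m i : ℝ) : ℂ)).im) := by
      rw [mul_assoc, Complex.re_ofReal_mul, Complex.I_mul_re]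
      ring
    rw [h2]
    have h3 : ((Real.pi : ℂ) * Complex.I *
          ((∑ i, (∑ j, Ω i j * ((m j : ℂ) + p j)) * ((m i : ℂ) + p i))
            - ∑ i, ∑ j, Ω i j * ((m j : ℝ) : ℂ) * ((m i : ℝ) : ℂ))
        + 2 * (Real.pi : ℂ) * Complex.I * (∑ j, ((m j : ℂ) + p j) * q j)).re
        ≤ Real.pi * norm ((∑ i, (∑ j, Ω i j * ((m j : ℂ) + p j)) * ((m i : ℂ) + p i))
            - ∑ i, ∑ j, Ω i j * ((m j : ℝ) : ℂ) * ((m i : ℝ) : ℂ))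
          + 2*Real.pi * norm (∑ j, ((m j : ℂ) + p j) * q j) := by
      refine le_trans (Complex.re_le_norm _) ?_
      refine le_trans (norm_add_le _ _) ?_
      have e1 : ∀ z : ℂ, norm ((Real.pi : ℂ) * Complex.I * z)
          = Real.pi * norm z := by
        intro z
        rw [norm_mul, norm_mul, Complex.norm_real, Real.norm_eq_abs, Complex.norm_I, abs_of_pos hπ, mul_one]
      have e2 : ∀ z : ℂ, norm (2 * (Real.pi : ℂ) * Complex.I * z)
          = 2 * Real.pi * norm z := by
        intro z
        rw [norm_mul, norm_mul, norm_mul, Complex.norm_two, Complex.norm_real, Real.norm_eq_abs, Complex.norm_I,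
          abs_of_pos hπ, mul_one]
      rw [e1, e2]
    have e1 := mul_le_mul_of_nonneg_left (hIm_coer m) hπ.le
    have e2 := mul_le_mul_of_nonneg_left (hQdiff m) hπ.le
    have e3 := mul_le_mul_of_nonneg_left (hLbound m) (by positivity : (0:ℝ) ≤ 2*Real.pi)
    linarith [h3, e1, e2, e3]
  -- final comparison
  have hE : ∀ m : Fin g → ℤ, (thetaB g Ω p q m).re + norm (thetaC g p α m)
      ≤ -(Real.pi*lam) * (∑ i, (m i : ℝ)^2)
        + (Real.pi*CW*(2*P+P^2) + 2*Real.pi*(Qc+P*Qc) + 2*Real.pi*(1+P))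
          * (1 + ∑ i, |(m i : ℝ)|) := by
    intro m
    have := hReB m
    have := hcB m
    nlinarith [hReB m, hcB m]
  refine Summable.of_nonneg_of_le (fun m => ?_) (fun m => ?_)
    (aux_summable_master g (Real.pi*lam)
      (Real.pi*CW*(2*P+P^2) + 2*Real.pi*(Qc+P*Qc) + 2*Real.pi*(1+P))
      (2*Real.pi*(1+P)) (by positivity) (by positivity))
  · simp only [thetaU]
    positivity
  · simp only [thetaU]
    have := hN0 m
    exact mul_le_mul (hcB m) (Real.exp_le_exp.mpr (hE m)) (Real.exp_pos _).le
      (by positivity)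

/-- Second variational formula for the modified theta constant:
`∂/∂q_α log θ̃[p,q](0) = −πi p_α + ∂_α log θ[p,q](0)`. -/
theorem thetaTilde_deriv_q (g : ℕ) (hg : 1 ≤ g)
    (Ω : Matrix (Fin g) (Fin g) ℂ) (hsym : Ω.IsSymm)
    (hpos : (Ω.map Complex.im).PosDef)
    (p q : Fin g → ℂ) (hθ : ThetaG g Ω p q 0 ≠ 0) (α : Fin g) :
    HasDerivAt (fun w : ℂ => ThetaTildeG g Ω p (Function.update q α w))
      (ThetaTildeG g Ω p q *
        (-(Real.pi : ℂ) * Complex.I * p α +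
          deriv (fun w : ℂ => ThetaG g Ω p q (Function.update (0 : Fin g → ℂ) α w)) 0 /
            ThetaG g Ω p q 0))
      (q α) := by
  classical
  have key : ∀ (v : Fin g → ℂ) (w : ℂ),
      ∑ j, v j * Function.update q α w j = (∑ j, v j * q j) + v α * (w - q α) := by
    intro v w
    have h1 : ∑ j, v j * Function.update q α w j
        = v α * w + ∑ j ∈ Finset.univ.erase α, v j * q j := by
      rw [← Finset.add_sum_erase _ (fun j => v j * Function.update q α w j)
        (Finset.mem_univ α)]
      congr 1
      · rw [Function.update_self]
      · exact Finset.sum_congr rfl fun j hj => by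
          rw [Function.update_of_ne (Finset.ne_of_mem_erase hj)]
    have h2 : ∑ j, v j * q j = v α * q α + ∑ j ∈ Finset.univ.erase α, v j * q j :=
      (Finset.add_sum_erase _ _ (Finset.mem_univ α)).symm
    rw [h1, h2]; ring
  have hθ0 : ThetaG g Ω p q 0 = ∑' m, Complex.exp (thetaB g Ω p q m) := by
    simp only [ThetaG]
    exact tsum_congr fun m => by simp only [thetaB, Pi.zero_apply, zero_add]
  have hθ' : (∑' m, Complex.exp (thetaB g Ω p q m)) ≠ 0 := hθ0 ▸ hθ
  have hsum0 : Summable fun m => Complex.exp (thetaB g Ω p q m) := by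
    by_contra hcon
    exact hθ' (tsum_eq_zero_of_not_summable hcon)
  have hF : ∀ t : ℂ, ThetaG g Ω p q (Function.update (0 : Fin g → ℂ) α t)
      = ∑' m, Complex.exp (thetaB g Ω p q m + thetaC g p α m * t) := by
    intro t
    simp only [ThetaG]
    refine tsum_congr fun m => ?_
    congr 1
    have h2 : ∀ j, Function.update (0 : Fin g → ℂ) α t j + q j
        = Function.update q α (t + q α) j := by
      intro j
      rcases eq_or_ne j α with rfl | hj
      · simp
      · simp [Function.update_of_ne hj]
    have h1 : ∑ j, ((m j : ℂ) + p j) * (Function.update (0 : Fin g → ℂ) α t j + q j)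
        = (∑ j, ((m j : ℂ) + p j) * q j) + ((m α : ℂ) + p α) * t := by
      simp_rw [h2]
      rw [key (fun j => (m j : ℂ) + p j) (t + q α)]
      ring
    rw [h1]
    simp only [thetaB, thetaC]
    ring
  have hTG : ∀ w : ℂ, ThetaG g Ω p (Function.update q α w) 0
      = ∑' m, Complex.exp (thetaB g Ω p q m + thetaC g p α m * (w - q α)) := by
    intro w
    simp only [ThetaG]
    refine tsum_congr fun m => ?_
    congr 1
    have h1 : ∑ j, ((m j : ℂ) + p j) * ((0 : Fin g → ℂ) j + Function.update q α w j)
        = (∑ j, ((m j : ℂ) + p j) * q j) + ((m α : ℂ) + p α) * (w - q α) := by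
      simp only [Pi.zero_apply, zero_add]
      exact key _ w
    rw [h1]
    simp only [thetaB, thetaC]
    ring
  have hTT : ∀ w : ℂ, ThetaTildeG g Ω p (Function.update q α w)
      = Complex.exp (-(Real.pi : ℂ) * Complex.I * (∑ j, p j * q j)) *
        (Complex.exp (-(Real.pi : ℂ) * Complex.I * (p α * (w - q α))) *
          ∑' m, Complex.exp (thetaB g Ω p q m + thetaC g p α m * (w - q α))) := by
    intro w
    simp only [ThetaTildeG]
    rw [hTG w, key p w, ← mul_assoc, ← Complex.exp_add]
    congr 2
    ring
  have hu := summable_thetaU g Ω p q α hg hpos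
  have hderivF : HasDerivAt
      (fun t : ℂ => ∑' m, Complex.exp (thetaB g Ω p q m + thetaC g p α m * t))
      (∑' m, thetaC g p α m *
        Complex.exp (thetaB g Ω p q m + thetaC g p α m * 0)) 0 := by
    refine hasDerivAt_tsum_of_isPreconnected
      (g' := fun m y => thetaC g p α m *
        Complex.exp (thetaB g Ω p q m + thetaC g p α m * y)) hu Metric.isOpen_ball
      (convex_ball (0 : ℂ) 1).isPreconnected ?_ ?_ (Metric.mem_ball_self one_pos) ?_
      (Metric.mem_ball_self one_pos)
    · intro m y _
      have h := (((hasDerivAt_id y).const_mul (thetaC g p α m)).const_add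
        (thetaB g Ω p q m)).cexp
      simpa [mul_comm] using h
    · intro m y hy
      rw [norm_mul, Complex.norm_exp]
      simp only [thetaU]
      refine mul_le_mul_of_nonneg_left (Real.exp_le_exp.mpr ?_) (norm_nonneg _)
      rw [Complex.add_re]
      have h5 : (thetaC g p α m * y).re ≤ norm (thetaC g p α m) := by
        refine le_trans (Complex.re_le_norm _) ?_
        rw [norm_mul]
        have hy1 : norm y ≤ 1 := by
          exact le_of_lt (mem_ball_zero_iff.mp hy)
        nlinarith [norm_nonneg (thetaC g p α m), norm_nonneg y]
      linarith
    · simpa using hsum0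
  have hd0 : (∑' m, thetaC g p α m *
        Complex.exp (thetaB g Ω p q m + thetaC g p α m * 0))
      = ∑' m, thetaC g p α m * Complex.exp (thetaB g Ω p q m) :=
    tsum_congr fun m => by rw [mul_zero, add_zero]
  rw [hd0] at hderivF
  have hFfun : (fun t : ℂ => ThetaG g Ω p q (Function.update (0 : Fin g → ℂ) α t))
      = fun t => ∑' m, Complex.exp (thetaB g Ω p q m + thetaC g p α m * t) :=
    funext hF
  have hFd : HasDerivAt
      (fun t : ℂ => ThetaG g Ω p q (Function.update (0 : Fin g → ℂ) α t))
      (∑' m, thetaC g p α m * Complex.exp (thetaB g Ω p q m)) 0 := by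
    rw [hFfun]
    exact hderivF
  have hder_eq : deriv (fun t : ℂ => ThetaG g Ω p q (Function.update (0 : Fin g → ℂ) α t)) 0
      = ∑' m, thetaC g p α m * Complex.exp (thetaB g Ω p q m) := hFd.deriv
  have h₁ : HasDerivAt (fun w : ℂ => w - q α) 1 (q α) := (hasDerivAt_id _).sub_const _
  have hT : HasDerivAt
      (fun w : ℂ => ∑' m, Complex.exp (thetaB g Ω p q m + thetaC g p α m * (w - q α)))
      (∑' m, thetaC g p α m * Complex.exp (thetaB g Ω p q m)) (q α) := by
    have h0 : HasDerivAt
        (fun t : ℂ => ∑' m, Complex.exp (thetaB g Ω p q m + thetaC g p α m * t))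
        (∑' m, thetaC g p α m * Complex.exp (thetaB g Ω p q m)) (q α - q α) := by
      rw [sub_self]
      exact hderivF
    exact h0.comp_sub_const (q α) (q α)
  have hE : HasDerivAt
      (fun w : ℂ => Complex.exp (-(Real.pi : ℂ) * Complex.I * (p α * (w - q α))))
      (Complex.exp (-(Real.pi : ℂ) * Complex.I * (p α * (q α - q α))) *
        (-(Real.pi : ℂ) * Complex.I * p α * 1)) (q α) := by
    have hinner : HasDerivAt
        (fun w : ℂ => -(Real.pi : ℂ) * Complex.I * (p α * (w - q α)))
        (-(Real.pi : ℂ) * Complex.I * p α * 1) (q α) := by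
      have h6 := h₁.const_mul (-(Real.pi : ℂ) * Complex.I * p α)
      simpa only [mul_assoc, mul_one] using h6
    exact hinner.cexp
  have hfinal := (hE.mul hT).const_mul
    (Complex.exp (-(Real.pi : ℂ) * Complex.I * (∑ j, p j * q j)))
  have hGfun : (fun w : ℂ => ThetaTildeG g Ω p (Function.update q α w))
      = fun w => Complex.exp (-(Real.pi : ℂ) * Complex.I * (∑ j, p j * q j)) *
        (Complex.exp (-(Real.pi : ℂ) * Complex.I * (p α * (w - q α))) *
          ∑' m, Complex.exp (thetaB g Ω p q m + thetaC g p α m * (w - q α))) :=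
    funext hTT
  rw [hGfun]
  convert hfinal using 1
  · rfl
  · rfl
  · rfl
  rw [hder_eq]
  simp only [sub_self, mul_zero, add_zero, mul_one, Complex.exp_zero, one_mul]
  simp only [ThetaTildeG]
  rw [hθ0]
  field_simp
end

section
/- Let r ∈ ℂ \ {0}, let f be meromorphic near 0 ∈ ℂ with a simple pole at 0 of residue r (i.e. f(z) − r/z extends holomorphically across 0), and let 𝔤 be holomorphic near 0. Then z · Q(z) → −1/(12r) as z → 0, where Q = (𝔤 − S_f)/(6f). That is, at a simple pole of the differential v with residue r, the differential Q_v has a simple pole with residue −1/(12r). -/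
set_option maxHeartbeats 1000000

private lemma Qv_key (z c gg a1 a2 r : ℂ) (hz : z ≠ 0) (hc : c ≠ 0) :
    z * ((gg - ((2 * r / z ^ 3 + a2) / (c / z) -
        (3/2) * ((-r / z ^ 2 + a1) / (c / z)) ^ 2)) / (6 * (c / z)))
    = (z ^ 2 * gg - ((2 * r + z ^ 3 * a2) * c - (3 / 2) * (-r + z ^ 2 * a1) ^ 2) / c ^ 2) /
      (6 * c) := by
  have hz2 : z ^ 2 ≠ 0 := pow_ne_zero _ hz
  have hz3 : z ^ 3 ≠ 0 := pow_ne_zero _ hz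
  have hc2 : c ^ 2 ≠ 0 := pow_ne_zero _ hc
  have hzc2 : z ^ 2 * c ^ 2 ≠ 0 := mul_ne_zero hz2 hc2
  have h6c : (6 : ℂ) * c ≠ 0 := mul_ne_zero (by norm_num) hc
  have h1 : (2 * r / z ^ 3 + a2) / (c / z)
      = ((2 * r + z ^ 3 * a2) * c) / (z ^ 2 * c ^ 2) := by
    rw [div_add' _ _ _ hz3, div_div_eq_mul_div, div_mul_eq_mul_div, div_div,
      div_eq_div_iff (mul_ne_zero hz3 hc) hzc2]
    ring
  have h2 : (-r / z ^ 2 + a1) / (c / z) = (-r + z ^ 2 * a1) / (z * c) := by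
    rw [div_add' _ _ _ hz2, div_div_eq_mul_div, div_mul_eq_mul_div, div_div,
      div_eq_div_iff (mul_ne_zero hz2 hc) (mul_ne_zero hz hc)]
    ring
  have h2sq : ((-r / z ^ 2 + a1) / (c / z)) ^ 2
      = (-r + z ^ 2 * a1) ^ 2 / (z ^ 2 * c ^ 2) := by
    rw [h2, div_pow, mul_pow]
  rw [h1, h2sq, (mul_div_assoc ((3:ℂ)/2) ((-r + z ^ 2 * a1) ^ 2) (z ^ 2 * c ^ 2)).symm,
    div_sub_div_same, sub_div' hzc2]
  conv_rhs => rw [sub_div' hc2, div_div]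
  rw [(mul_div_assoc (6:ℂ) c z).symm, div_div_eq_mul_div, div_mul_eq_mul_div, div_div,
    mul_div_assoc', div_eq_div_iff (mul_ne_zero hzc2 h6c) (mul_ne_zero hc2 h6c)]
  ring

private noncomputable def QvAux (r : ℂ) (h h1 h2 g : ℂ → ℂ) : ℂ → ℂ := fun z =>
  (z ^ 2 * g z -
      ((2 * r + z ^ 3 * h2 z) * (r + z * h z)
        - (3 / 2) * (-r + z ^ 2 * h1 z) ^ 2) / (r + z * h z) ^ 2) /
    (6 * (r + z * h z))

/-- Local behaviour of the differential `Q_v = (S_B − S_v)/(6v)` at a simple pole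
of `v = f dz` with residue `r` (i.e. `f(z) − r/z` extends holomorphically across `0`):
one has `z·Q(z) → −1/(12r)` as `z → 0`, i.e. `Q_v` has a simple pole of residue
`−1/(12r)`. Here `Q = (𝔤 − S_f)/(6f)`, `S_f = f''/f − (3/2)(f'/f)²`, and the
holomorphic function `𝔤` represents the Bergman projective connection. -/
theorem Qv_simple_pole_residue (r : ℂ) (hr : r ≠ 0) (f 𝔤 : ℂ → ℂ)
    (U : Set ℂ) (hU : IsOpen U) (h0U : (0:ℂ) ∈ U)
    (h : ℂ → ℂ) (hh : DifferentiableOn ℂ h U)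
    (hf : ∀ z ∈ U \ {(0:ℂ)}, f z = r / z + h z)
    (V : Set ℂ) (hV : IsOpen V) (h0V : (0:ℂ) ∈ V)
    (h𝔤 : DifferentiableOn ℂ 𝔤 V) :
    Filter.Tendsto
      (fun z : ℂ => z *
        ((𝔤 z - (deriv (deriv f) z / f z - (3/2) * (deriv f z / f z) ^ 2)) /
          (6 * f z)))
      (nhdsWithin 0 {(0:ℂ)}ᶜ)
      (nhds (-1 / (12 * r))) := by
  have hUan : AnalyticOnNhd ℂ h U := hh.analyticOnNhd hU
  have hW : IsOpen (U \ {(0:ℂ)}) := hU.sdiff isClosed_singleton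
  -- first derivative of f on the punctured neighbourhood
  have hd1 : ∀ z ∈ U \ {(0:ℂ)}, deriv f z = -r / z ^ 2 + deriv h z := by
    intro z hz
    have hz0 : z ≠ 0 := hz.2
    have heq : f =ᶠ[nhds z] (fun w => r / w + h w) :=
      Filter.eventuallyEq_of_mem (hW.mem_nhds hz) hf
    rw [heq.deriv_eq]
    have hdh : HasDerivAt h (deriv h z) z :=
      ((hh.differentiableAt (hU.mem_nhds hz.1))).hasDerivAt
    have h1 : HasDerivAt (fun w : ℂ => r / w + h w) (r * -(z ^ 2)⁻¹ + deriv h z) z := by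
      simpa [div_eq_mul_inv] using ((hasDerivAt_inv hz0).const_mul r).fun_add hdh
    rw [h1.deriv]
    field_simp
  -- second derivative of f on the punctured neighbourhood
  have hd2 : ∀ z ∈ U \ {(0:ℂ)}, deriv (deriv f) z = 2 * r / z ^ 3 + deriv (deriv h) z := by
    intro z hz
    have hz0 : z ≠ 0 := hz.2
    have heq : deriv f =ᶠ[nhds z] (fun w => -r / w ^ 2 + deriv h w) :=
      Filter.eventuallyEq_of_mem (hW.mem_nhds hz) hd1
    rw [heq.deriv_eq]
    have hdh : HasDerivAt (deriv h) (deriv (deriv h) z) z :=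
      ((hUan.deriv z hz.1).differentiableAt).hasDerivAt
    have hpow : HasDerivAt (fun w : ℂ => w ^ 2) (2 * z) z := by
      simpa using hasDerivAt_pow 2 z
    have hinv : HasDerivAt (fun w : ℂ => (w ^ 2)⁻¹) (-(2 * z) / (z ^ 2) ^ 2) z :=
      hpow.inv (pow_ne_zero 2 hz0)
    have h1 : HasDerivAt (fun w : ℂ => -r / w ^ 2 + deriv h w)
        (-r * (-(2 * z) / (z ^ 2) ^ 2) + deriv (deriv h) z) z := by
      simpa [div_eq_mul_inv, mul_comm] using (hinv.const_mul (-r)).fun_add hdh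
    rw [h1.deriv]
    field_simp
  have hch : ContinuousAt h 0 := (hh.differentiableAt (hU.mem_nhds h0U)).continuousAt
  have hch1 : ContinuousAt (deriv h) 0 := (hUan.deriv 0 h0U).continuousAt
  have hch2 : ContinuousAt (deriv (deriv h)) 0 := (hUan.deriv.deriv 0 h0U).continuousAt
  have hcg : ContinuousAt 𝔤 0 := (h𝔤.differentiableAt (hV.mem_nhds h0V)).continuousAt
  have hcc : ContinuousAt (fun z : ℂ => r + z * h z) 0 :=
    continuousAt_const.add (continuousAt_id.mul hch)
  have hGc : ContinuousAt (QvAux r h (deriv h) (deriv (deriv h)) 𝔤) 0 := by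
    unfold QvAux
    apply ContinuousAt.div
    · apply ContinuousAt.sub
      · fun_prop
      · apply ContinuousAt.div
        · fun_prop
        · exact hcc.pow 2
        · simp [hr]
    · fun_prop
    · simp [hr]
  have hG0 : QvAux r h (deriv h) (deriv (deriv h)) 𝔤 0 = -1 / (12 * r) := by
    unfold QvAux
    norm_num
    field_simp
    ring
  have hlim : Filter.Tendsto (QvAux r h (deriv h) (deriv (deriv h)) 𝔤)
      (nhdsWithin 0 {(0:ℂ)}ᶜ) (nhds (-1 / (12 * r))) := by
    rw [← hG0]
    exact (hGc.continuousWithinAt).tendsto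
  refine hlim.congr' ?_
  have hne : ∀ᶠ z in nhds (0:ℂ), r + z * h z ≠ 0 :=
    hcc.eventually_ne (by simp [hr])
  have hmemU : ∀ᶠ z in nhds (0:ℂ), z ∈ U := hU.eventually_mem h0U
  filter_upwards [nhdsWithin_le_nhds hne, nhdsWithin_le_nhds hmemU,
    self_mem_nhdsWithin] with z hcz hzU hz0
  have hz0' : z ≠ 0 := hz0
  have hzW : z ∈ U \ {(0:ℂ)} := ⟨hzU, hz0'⟩
  unfold QvAux
  rw [hf z hzW, hd1 z hzW, hd2 z hzW]
  have hfz : r / z + h z = (r + z * h z) / z := by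
    rw [eq_div_iff hz0', add_mul, div_mul_cancel₀ _ hz0']
    ring
  rw [hfz]
  exact (Qv_key z (r + z * h z) (𝔤 z) (deriv h z) (deriv (deriv h) z) r hz0' hcz).symm
end

section
/- Assume additionally ζ ∉ { p/q, q/p, −pq, −1/(pq) }. Then the following rational identity holds: 2q²/ζ + ((q²−p²)/(1+p²)) · ( −ζ⁻²/(ζ⁻¹ − p/q) − 1/(ζ − p/q) ) + ((p²q² − 1)/(1+p²)) · ( −ζ⁻²/(ζ⁻¹ + 1/(pq)) − 1/(ζ + 1/(pq)) ) = − p²(q²+1)·(ζ − ζ⁻¹)² / ( ζ·(ζ − p/q)(ζ⁻¹ − p/q)(ζ + pq)(ζ⁻¹ + pq) ). (The left-hand side is the ζ-derivative of the homological coordinate z1 = ∫_{x1}^{x2} v, computed from z1 = 2q² log ζ + ((q²−p²)/(1+p²)) log((ζ⁻¹−p/q)/(ζ−p/q)) + ((p²q²−1)/(1+p²)) log((ζ⁻¹+1/(pq))/(ζ+1/(pq))); this is the paper's formula for dz1/dζ.) -/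
set_option maxHeartbeats 2000000


/-- The paper's formula (dz1dz) for `dz1/dζ`, where
`z1 = 2q² log ζ + ((q²−p²)/(1+p²)) log((ζ⁻¹−p/q)/(ζ−p/q))
     + ((p²q²−1)/(1+p²)) log((ζ⁻¹+1/(pq))/(ζ+1/(pq)))`
is the homological coordinate `∫_{x1}^{x2} v`: for `ζ` away from
`{0, p/q, q/p, −pq, −1/(pq)}`,
the termwise `ζ`-derivative of `z1` equals
`−p²(q²+1)(ζ−ζ⁻¹)² / (ζ(ζ−p/q)(ζ⁻¹−p/q)(ζ+pq)(ζ⁻¹+pq))`. -/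
theorem dz1_dzeta (p q ζ : ℂ) (hp : p ≠ 0) (hq : q ≠ 0)
    (hp2 : p ^ 2 ≠ -1) (hq2 : q ^ 2 ≠ -1) (hζ : ζ ≠ 0)
    (h1 : ζ ≠ p / q) (h2 : ζ ≠ q / p) (h3 : ζ ≠ -(p * q)) (h4 : ζ ≠ -(1 / (p * q))) :
    2 * q ^ 2 / ζ +
      ((q ^ 2 - p ^ 2) / (1 + p ^ 2)) *
        (-(ζ ^ 2)⁻¹ / (ζ⁻¹ - p / q) - 1 / (ζ - p / q)) +
      ((p ^ 2 * q ^ 2 - 1) / (1 + p ^ 2)) *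
        (-(ζ ^ 2)⁻¹ / (ζ⁻¹ + 1 / (p * q)) - 1 / (ζ + 1 / (p * q))) =
    -(p ^ 2 * (q ^ 2 + 1) * (ζ - ζ⁻¹) ^ 2) /
      (ζ * (ζ - p / q) * (ζ⁻¹ - p / q) * (ζ + p * q) * (ζ⁻¹ + p * q)) := by
  have hpq : p * q ≠ 0 := mul_ne_zero hp hq
  have hP : (1 : ℂ) + p ^ 2 ≠ 0 := fun h => hp2 (by linear_combination h)
  have f1 : q * ζ - p ≠ 0 := by
    intro h; apply h1; field_simp; linear_combination h
  have f2 : q - p * ζ ≠ 0 := by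
    intro h; apply h2; field_simp; linear_combination -h
  have f3 : ζ + p * q ≠ 0 := fun h => h3 (by linear_combination h)
  have f4 : 1 + p * q * ζ ≠ 0 := by
    intro h; apply h4; field_simp; linear_combination h
  have t1 : -(ζ ^ 2)⁻¹ / (ζ⁻¹ - p / q) - 1 / (ζ - p / q)
      = -q / (ζ * (q - p * ζ)) - q / (q * ζ - p) := by
    have r1 : ζ - p / q = (q * ζ - p) / q := by field_simp
    have r2 : ζ⁻¹ - p / q = (q - p * ζ) / (q * ζ) := by field_simp
    rw [r1, r2]
    field_simp
  have t2 : -(ζ ^ 2)⁻¹ / (ζ⁻¹ + 1 / (p * q)) - 1 / (ζ + 1 / (p * q))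
      = -(p * q) / (ζ * (ζ + p * q)) - p * q / (1 + p * q * ζ) := by
    have r3 : ζ + 1 / (p * q) = (1 + p * q * ζ) / (p * q) := by field_simp; ring
    have r4 : ζ⁻¹ + 1 / (p * q) = (ζ + p * q) / (p * q * ζ) := by field_simp; ring
    rw [r3, r4]
    field_simp
  have tR : -(p ^ 2 * (q ^ 2 + 1) * (ζ - ζ⁻¹) ^ 2) /
      (ζ * (ζ - p / q) * (ζ⁻¹ - p / q) * (ζ + p * q) * (ζ⁻¹ + p * q))
      = -(p ^ 2 * (q ^ 2 + 1) * (ζ ^ 2 - 1) ^ 2 * q ^ 2) /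
        ((q * ζ - p) * (q - p * ζ) * (ζ + p * q) * (1 + p * q * ζ) * ζ) := by
    have r1 : ζ - p / q = (q * ζ - p) / q := by field_simp
    have r2 : ζ⁻¹ - p / q = (q - p * ζ) / (q * ζ) := by field_simp
    have r5 : ζ⁻¹ + p * q = (1 + p * q * ζ) / ζ := by field_simp
    have r6 : ζ - ζ⁻¹ = (ζ ^ 2 - 1) / ζ := by field_simp
    have hden : ζ * ((q * ζ - p) / q) * ((q - p * ζ) / (q * ζ)) * (ζ + p * q) *
        ((1 + p * q * ζ) / ζ)
        = (q * ζ - p) * (q - p * ζ) * (ζ + p * q) * (1 + p * q * ζ) / (q ^ 2 * ζ) := by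
      field_simp
    rw [r1, r2, r5, r6, hden, div_div_eq_mul_div]
    rw [div_eq_div_iff (mul_ne_zero (mul_ne_zero (mul_ne_zero f1 f2) f3) f4)
      (mul_ne_zero (mul_ne_zero (mul_ne_zero (mul_ne_zero f1 f2) f3) f4) hζ)]
    field_simp
  have g2 : ζ * (q - p * ζ) ≠ 0 := mul_ne_zero hζ f2
  have g3 : ζ * (ζ + p * q) ≠ 0 := mul_ne_zero hζ f3
  have hD : (q * ζ - p) * (q - p * ζ) * (ζ + p * q) * (1 + p * q * ζ) * ζ ≠ 0 :=
    mul_ne_zero (mul_ne_zero (mul_ne_zero (mul_ne_zero f1 f2) f3) f4) hζ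
  have hD2 : (1 + p ^ 2) * (ζ * (q - p * ζ) * (q * ζ - p)) ≠ 0 :=
    mul_ne_zero hP (mul_ne_zero g2 f1)
  have hD3 : (1 + p ^ 2) * (ζ * (ζ + p * q) * (1 + p * q * ζ)) ≠ 0 :=
    mul_ne_zero hP (mul_ne_zero g3 f4)
  have b1 : -q / (ζ * (q - p * ζ)) - q / (q * ζ - p)
      = (-q * (q * ζ - p) - ζ * (q - p * ζ) * q) / (ζ * (q - p * ζ) * (q * ζ - p)) :=
    div_sub_div _ _ g2 f1
  have b2 : -(p * q) / (ζ * (ζ + p * q)) - p * q / (1 + p * q * ζ)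
      = (-(p * q) * (1 + p * q * ζ) - ζ * (ζ + p * q) * (p * q))
        / (ζ * (ζ + p * q) * (1 + p * q * ζ)) :=
    div_sub_div _ _ g3 f4
  rw [t1, t2, tR, b1, b2, div_mul_div_comm, div_mul_div_comm,
    div_add_div _ _ hζ hD2, div_add_div _ _ (mul_ne_zero hζ hD2) hD3,
    div_eq_div_iff (mul_ne_zero (mul_ne_zero hζ hD2) hD3) hD]
  ring
end

section
/- Let r1, r2, r3 ∈ ℂ with r3 ≠ 0 and r4 := −(r1+r2+r3) ≠ 0, let t ∈ ℂ \ {0,1}, let s ∈ ℂ satisfy s² = Δ with s ≠ 0, and let x1 = −( r1 + r3 + (r1+r2)t + s )/(2 r4), x2 = −( r1 + r3 + (r1+r2)t − s )/(2 r4) be the two (distinct) zeros of v; assume x1 ≠ t and x2 ≠ t. Then r3 · ( 1/(x1 − t) − 1/(x2 − t) ) = − s / ( t(t−1) ). (Since dz1/dt = ∫_{x1}^{x2} ∂_t v = r3(1/(x1−t) − 1/(x2−t)), this is the paper's formula dz1/dt = −√Δ/(t(t−1)) for the derivative of the homological coordinate z1 = ∫_{x1}^{x2} v.) -/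
/-- The paper's formula (derDeltat): `dz1/dt = −√Δ/(t(t−1))` for the homological
coordinate `z1 = ∫_{x1}^{x2} v`. Since `dz1/dt = r3(1/(x1−t) − 1/(x2−t))`,
the claim is `r3(1/(x1−t) − 1/(x2−t)) = −s/(t(t−1))`, where `s² = Δ`,
`x_{1,2} = −(r1 + r3 + (r1+r2)t ± s)/(2 r4)` are the two distinct zeros of `v`. -/
theorem dz1_dt (r1 r2 r3 r4 t s x1 x2 : ℂ)
    (hr3 : r3 ≠ 0) (hr4 : r4 = -(r1 + r2 + r3)) (hr4ne : r4 ≠ 0)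
    (ht0 : t ≠ 0) (ht1 : t ≠ 1)
    (hs2 : s ^ 2 = ((r1 + r2) * t + r1 + r3) ^ 2 + 4 * r1 * r4 * t) (hs : s ≠ 0)
    (hx1 : x1 = -(r1 + r3 + (r1 + r2) * t + s) / (2 * r4))
    (hx2 : x2 = -(r1 + r3 + (r1 + r2) * t - s) / (2 * r4))
    (hx1t : x1 ≠ t) (hx2t : x2 ≠ t) :
    r3 * (1 / (x1 - t) - 1 / (x2 - t)) = -s / (t * (t - 1)) := by
  have h1 : x1 - t ≠ 0 := sub_ne_zero.mpr hx1t
  have h2 : x2 - t ≠ 0 := sub_ne_zero.mpr hx2t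
  have ht1' : t - 1 ≠ 0 := sub_ne_zero.mpr ht1
  have e1 : (x1 - t) * (2 * r4) = -(r1 + r3 + (r1 + r2) * t + s) - 2 * r4 * t := by
    rw [hx1]; field_simp
  have e2 : (x2 - t) * (2 * r4) = -(r1 + r3 + (r1 + r2) * t - s) - 2 * r4 * t := by
    rw [hx2]; field_simp
  have key4 : ((x1 - t) * (x2 - t) * r4) * (4 * r4) = (-r3 * t * (t - 1)) * (4 * r4) := by
    have : ((x1 - t) * (2 * r4)) * ((x2 - t) * (2 * r4)) = (-r3 * t * (t - 1)) * (4 * r4) := by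
      rw [e1, e2]; linear_combination -hs2 + 4 * r4 * t ^ 2 * hr4
    linear_combination this
  have key : (x1 - t) * (x2 - t) * r4 = -r3 * t * (t - 1) :=
    mul_right_cancel₀ (by simp [hr4ne]) key4
  have prod : (x1 - t) * (x2 - t) = -r3 * t * (t - 1) / r4 := by
    rw [eq_div_iff hr4ne]; exact key
  have diff : x2 - x1 = s / r4 := by
    rw [hx1, hx2]; field_simp; ring
  have step : r3 * (1 / (x1 - t) - 1 / (x2 - t)) = r3 * (x2 - x1) / ((x1 - t) * (x2 - t)) := by
    field_simp
    ring
  rw [step, diff, prod]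
  field_simp
end
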